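/- (Monotonic decrease of the total-Bregman f-separable objective under the generalized update; appendix theorem.) Let E be a real inner product space, φ: E → ℝ differentiable and strictly convex, c ≥ 0, and tBD(x, θ) = d_φ(θ, x)/√(1 + c²‖∇φ(x)‖²) with d_φ(θ, x) = φ(θ) − φ(x) − ⟨θ − x, ∇φ(x)⟩. Let f: [0, ∞) → ℝ be differentiable, monotone nondecreasing and concave. Let x_1, …, x_n ∈ E, θ ∈ E, and set weights w_i = f'(tBD(x_i, θ))/√(1 + c²‖∇φ(x_i)‖²) with Σ_i w_i > 0. Suppose θ̃ ∈ E satisfies the update condition (Σ_i w_i) ∇φ(θ̃) = Σ_i w_i ∇φ(x_i). Then Σ_{i=1}^n f(tBD(x_i, θ)) − Σ_{i=1}^n f(tBD(x_i, θ̃)) ≥ d_φ(θ, θ̃) · Σ_{i=1}^n w_i ≥ 0; in particular the update monotonically decreases the objective. -/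

import Mathlib

open scoped RealInnerProductSpace

/-- The Bregman divergence `d_φ(x, θ) = φ(x) − φ(θ) − ⟨x − θ, ∇φ(θ)⟩`. -/
noncomputable def bregman {E : Type*} [NormedAddCommGroup E] [InnerProductSpace ℝ E]
    [CompleteSpace E] (φ : E → ℝ) (x θ : E) : ℝ :=
  φ x - φ θ - ⟪x - θ, gradient φ θ⟫

/-- The total Bregman divergence
`tBD(x, θ) = d_φ(θ, x)/√(1 + c²‖∇φ(x)‖²)`. -/
noncomputable def tBD {E : Type*} [NormedAddCommGroup E] [InnerProductSpace ℝ E]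
    [CompleteSpace E] (φ : E → ℝ) (c : ℝ) (x θ : E) : ℝ :=
  bregman φ θ x / Real.sqrt (1 + c ^ 2 * ‖gradient φ x‖ ^ 2)

/-- Nonnegativity of the Bregman divergence of a differentiable convex function. -/
lemma bregman_nonneg_aux {E : Type*} [NormedAddCommGroup E] [InnerProductSpace ℝ E]
    [CompleteSpace E] {φ : E → ℝ} (hφdiff : Differentiable ℝ φ)
    (hφconv : ConvexOn ℝ Set.univ φ) (a b : E) : 0 ≤ bregman φ a b := by
  have hgconv : ConvexOn ℝ Set.univ (fun t : ℝ => φ (AffineMap.lineMap b a t)) := by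
    simpa [Function.comp_def] using hφconv.comp_affineMap (AffineMap.lineMap b a)
  have hF : HasFDerivAt φ (InnerProductSpace.toDual ℝ E (gradient φ b)) b :=
    ((hφdiff b).hasGradientAt).hasFDerivAt
  have hline : HasDerivAt (fun t : ℝ => (AffineMap.lineMap b a : ℝ →ᵃ[ℝ] E) t) (a - b) 0 := by
    simpa [AffineMap.lineMap_apply_module'] using
      (((hasDerivAt_id (0:ℝ)).smul_const (a - b)).add_const b)
  have hF' : HasFDerivAt φ (InnerProductSpace.toDual ℝ E (gradient φ b))
      ((AffineMap.lineMap b a : ℝ →ᵃ[ℝ] E) 0) := by simpa using hF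
  have hcomp : HasDerivAt (fun t : ℝ => φ (AffineMap.lineMap b a t))
      (⟪gradient φ b, a - b⟫) 0 := by
    simpa [InnerProductSpace.toDual_apply_apply, Function.comp_def] using hF'.comp_hasDerivAt 0 hline
  have h := hgconv.le_slope_of_hasDerivAt (Set.mem_univ 0) (Set.mem_univ 1) one_pos hcomp
  have hsl : slope (fun t : ℝ => φ (AffineMap.lineMap b a t)) 0 1 = φ a - φ b := by
    simp [slope_def_field]
  rw [hsl] at h
  have hic : ⟪a - b, gradient φ b⟫ = ⟪gradient φ b, a - b⟫ := real_inner_comm _ _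
  simp only [bregman, hic]
  linarith

/-- Tangent-line inequality for a differentiable concave function on `[0, ∞)`. -/
lemma concave_tangent_aux {f : ℝ → ℝ} (hfdiff : DifferentiableOn ℝ f (Set.Ici 0))
    (hfconc : ConcaveOn ℝ (Set.Ici 0) f) {a b : ℝ} (ha : a ∈ Set.Ici (0:ℝ))
    (hb : b ∈ Set.Ici (0:ℝ)) :
    f b - f a ≤ derivWithin f (Set.Ici 0) a * (b - a) := by
  set d := derivWithin f (Set.Ici 0) a with hd'
  have hconv : ConvexOn ℝ (Set.Ici 0) (fun t => -f t) := hfconc.neg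
  have hd : HasDerivWithinAt (fun t => -f t) (-d) (Set.Ici 0) a :=
    ((hfdiff a ha).hasDerivWithinAt).neg
  rcases lt_trichotomy a b with h | h | h
  · have h2 := hconv.le_slope_of_hasDerivWithinAt ha hb h hd
    rw [slope_def_field, le_div_iff₀ (by linarith)] at h2
    nlinarith
  · simp [h]
  · have h2 := hconv.slope_le_of_hasDerivWithinAt hb ha h hd
    rw [slope_def_field, div_le_iff₀ (by linarith)] at h2
    nlinarith

/-- Monotonic decrease of the total-Bregman `f`-separable objective under the
generalized update: with weights `w_i = f'(tBD(x_i, θ))/√(1 + c²‖∇φ(x_i)‖²)`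
and `θ̃` satisfying `(Σ_i w_i) ∇φ(θ̃) = Σ_i w_i ∇φ(x_i)`, the decrease of the
objective is at least `d_φ(θ, θ̃) · Σ_i w_i ≥ 0`. -/
theorem total_bregman_update_decreases_objective
    {E : Type*} [NormedAddCommGroup E] [InnerProductSpace ℝ E] [CompleteSpace E]
    (φ : E → ℝ) (hφdiff : Differentiable ℝ φ)
    (hφconv : StrictConvexOn ℝ Set.univ φ)
    (c : ℝ) (hc : 0 ≤ c)
    (f : ℝ → ℝ) (hfdiff : DifferentiableOn ℝ f (Set.Ici 0))
    (hfmono : MonotoneOn f (Set.Ici 0)) (hfconc : ConcaveOn ℝ (Set.Ici 0) f)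
    (n : ℕ) (x : Fin n → E) (θ : E)
    (w : Fin n → ℝ)
    (hw : ∀ i, w i = derivWithin f (Set.Ici 0) (tBD φ c (x i) θ) /
      Real.sqrt (1 + c ^ 2 * ‖gradient φ (x i)‖ ^ 2))
    (hwpos : 0 < ∑ i, w i)
    (θnew : E)
    (hθnew : (∑ i, w i) • gradient φ θnew = ∑ i, w i • gradient φ (x i)) :
    bregman φ θ θnew * ∑ i, w i ≤
      (∑ i, f (tBD φ c (x i) θ)) - ∑ i, f (tBD φ c (x i) θnew) ∧
    0 ≤ bregman φ θ θnew * ∑ i, w i := by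
  have hbrnn : ∀ u v : E, 0 ≤ bregman φ u v :=
    bregman_nonneg_aux hφdiff hφconv.convexOn
  have hs : ∀ i : Fin n, (0:ℝ) < Real.sqrt (1 + c ^ 2 * ‖gradient φ (x i)‖ ^ 2) :=
    fun i => Real.sqrt_pos.mpr (by positivity)
  have htθ : ∀ i, tBD φ c (x i) θ ∈ Set.Ici (0:ℝ) :=
    fun i => div_nonneg (hbrnn _ _) (hs i).le
  have htθnew : ∀ i, tBD φ c (x i) θnew ∈ Set.Ici (0:ℝ) :=
    fun i => div_nonneg (hbrnn _ _) (hs i).le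
  have hper : ∀ i, f (tBD φ c (x i) θnew) - f (tBD φ c (x i) θ) ≤
      w i * (bregman φ θnew (x i) - bregman φ θ (x i)) := by
    intro i
    have h1 := concave_tangent_aux hfdiff hfconc (htθ i) (htθnew i)
    have h2 : tBD φ c (x i) θnew - tBD φ c (x i) θ
        = (bregman φ θnew (x i) - bregman φ θ (x i)) /
          Real.sqrt (1 + c ^ 2 * ‖gradient φ (x i)‖ ^ 2) := by
      rw [tBD, tBD, div_sub_div_same]
    rw [h2] at h1
    rw [hw i, div_mul_eq_mul_div, mul_div_assoc]
    exact h1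
  have hsum := Finset.sum_le_sum (fun i (_ : i ∈ Finset.univ) => hper i)
  rw [Finset.sum_sub_distrib] at hsum
  have key : ∑ i, w i * (bregman φ θnew (x i) - bregman φ θ (x i))
      = -(bregman φ θ θnew * ∑ i, w i) := by
    have h1 : ∀ i : Fin n, bregman φ θnew (x i) - bregman φ θ (x i)
        = (φ θnew - φ θ) - ⟪θnew - θ, gradient φ (x i)⟫ := by
      intro i
      simp only [bregman, inner_sub_left]; ring
    have h2 : ∑ i, w i * ⟪θnew - θ, gradient φ (x i)⟫
        = (∑ i, w i) * ⟪θnew - θ, gradient φ θnew⟫ := by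
      have h := congrArg (fun z => ⟪θnew - θ, z⟫) hθnew
      simp only [inner_sum, real_inner_smul_right] at h
      rw [← h]
    have h3 : ⟪θnew - θ, gradient φ θnew⟫ = -⟪θ - θnew, gradient φ θnew⟫ := by
      rw [show θnew - θ = -(θ - θnew) by abel, inner_neg_left]
    simp only [h1, mul_sub]
    rw [Finset.sum_sub_distrib, Finset.sum_sub_distrib, ← Finset.sum_mul, ← Finset.sum_mul, h2, bregman, h3]; ring
  rw [key] at hsum
  exact ⟨by linarith, mul_nonneg (hbrnn θ θnew) hwpos.le⟩
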